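/- Under the assumptions of the previous setting (Ruspini, 2-overlapping, strongly normal, min-convex, and additionally each f_i strictly min-convex on its support), for each i the restrictions of f_i and f_{i+1} to [t_i, t_{i+1}] are injective, hence bijective onto [0,1]. -/

import Mathlib

/-- For a 2-overlapping Ruspini partition of continuous fuzzy sets, each strongly
normal (peak `t i`, `0 = t_1 < ⋯ < t_n = 1`), min-convex, and strictly min-convex
on its support, the restrictions of `f i` and `f (i+1)` to `[t_i, t_{i+1}]` are
bijective onto `[0,1]`. -/
theorem stmt10 (n : ℕ) (hn : 2 ≤ n) (f : Fin n → ℝ → ℝ)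
    (hcont : ∀ i, ContinuousOn (f i) (Set.Icc 0 1))
    (hmap : ∀ i, Set.MapsTo (f i) (Set.Icc 0 1) (Set.Icc 0 1))
    (hruspini : ∀ x ∈ Set.Icc (0:ℝ) 1, ∑ i : Fin n, f i x = 1)
    (hoverlap : ∀ x ∈ Set.Icc (0:ℝ) 1, ∀ i₁ i₂ i₃ : Fin n,
      i₁ ≠ i₂ → i₁ ≠ i₃ → i₂ ≠ i₃ →
      min (f i₁ x) (min (f i₂ x) (f i₃ x)) = 0)
    (t : Fin n → ℝ) (hmono : StrictMono t)
    (ht0 : t ⟨0, by omega⟩ = 0)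
    (ht1 : t ⟨n - 1, by omega⟩ = 1)
    (hpeak : ∀ i, f i (t i) = 1)
    (hlt : ∀ i, ∀ y ∈ Set.Icc (0:ℝ) 1, y ≠ t i → f i y < 1)
    (hconv : ∀ i, ∀ x ∈ Set.Icc (0:ℝ) 1, ∀ y ∈ Set.Icc (0:ℝ) 1,
      ∀ l ∈ Set.Icc (0:ℝ) 1, min (f i x) (f i y) ≤ f i (l * x + (1 - l) * y))
    (hsconv : ∀ i, ∀ x y : ℝ, x < y →
      Set.Icc x y ⊆ {z | z ∈ Set.Icc (0:ℝ) 1 ∧ 0 < f i z} →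
      ∀ l : ℝ, 0 < l → l < 1 → min (f i x) (f i y) < f i (l * x + (1 - l) * y)) :
    ∀ i : Fin n, ∀ hi : (i : ℕ) + 1 < n,
      Set.BijOn (f i) (Set.Icc (t i) (t ⟨(i : ℕ) + 1, hi⟩)) (Set.Icc 0 1) ∧
      Set.BijOn (f ⟨(i : ℕ) + 1, hi⟩)
        (Set.Icc (t i) (t ⟨(i : ℕ) + 1, hi⟩)) (Set.Icc 0 1) := by
  -- every peak point lies in [0,1]
  have htmem : ∀ k : Fin n, t k ∈ Set.Icc (0:ℝ) 1 := by
    intro k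
    constructor
    · rw [← ht0]
      exact hmono.monotone (by simp [Fin.le_def])
    · rw [← ht1]
      exact hmono.monotone (by simp only [Fin.le_def]; omega)
  -- at a peak point of m, every other function vanishes
  have hzero : ∀ k m : Fin n, k ≠ m → f k (t m) = 0 := by
    intro k m hkm
    have hs := hruspini (t m) (htmem m)
    have hadd := Finset.add_sum_erase Finset.univ (fun k => f k (t m)) (Finset.mem_univ m)
    simp only [hpeak m] at hadd
    have hsum0 : ∑ k ∈ Finset.univ.erase m, f k (t m) = 0 := by
      linarith
    have hnn : ∀ k ∈ Finset.univ.erase m, 0 ≤ f k (t m) := fun k _ => (hmap k (htmem m)).1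
    exact (Finset.sum_eq_zero_iff_of_nonneg hnn).mp hsum0 k (by simp [hkm])
  -- positivity propagates on intervals by min-convexity
  have hposIcc : ∀ (k : Fin n) (u v : ℝ), u ∈ Set.Icc (0:ℝ) 1 → v ∈ Set.Icc (0:ℝ) 1 →
      u < v → 0 < f k u → 0 < f k v → ∀ z ∈ Set.Icc u v, 0 < f k z := by
    intro k u v hu hv huv hfu hfv z hz
    have hne : v - u ≠ 0 := ne_of_gt (by linarith)
    set l := (v - z) / (v - u) with hl
    have hl0 : 0 ≤ l := div_nonneg (by linarith [hz.2]) (by linarith)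
    have hl1 : l ≤ 1 := by
      rw [hl, div_le_one (by linarith)]; linarith [hz.1]
    have hcomb : l * u + (1 - l) * v = z := by
      rw [hl]; field_simp; ring
    have h := hconv k u hu v hv l ⟨hl0, hl1⟩
    rw [hcomb] at h
    exact lt_of_lt_of_le (lt_min hfu hfv) h
  intro i hi
  set j : Fin n := ⟨(i : ℕ) + 1, hi⟩ with hj
  have hij : i < j := by simp [hj, Fin.lt_def]
  have hji : j ≠ i := by
    intro h
    have : (j : ℕ) = (i : ℕ) := by rw [h]
    simp [hj] at this
  have hab : t i < t j := hmono hij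
  have hI : Set.Icc (t i) (t j) ⊆ Set.Icc (0:ℝ) 1 := by
    intro x hx
    exact ⟨le_trans (htmem i).1 hx.1, le_trans hx.2 (htmem j).2⟩
  -- only f i and f j can be positive on [t i, t j]
  have hother : ∀ x ∈ Set.Icc (t i) (t j), ∀ k : Fin n, k ≠ i → k ≠ j → f k x = 0 := by
    intro x hx k hki hkj
    by_contra hne
    have hpos : 0 < f k x := lt_of_le_of_ne (hmap k (hI hx)).1 (Ne.symm hne)
    have hcase : (k : ℕ) < (i : ℕ) ∨ (i : ℕ) + 1 < (k : ℕ) := by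
      have h1 : (k : ℕ) ≠ (i : ℕ) := fun h => hki (Fin.ext h)
      have h2 : (k : ℕ) ≠ (i : ℕ) + 1 := fun h => hkj (Fin.ext h)
      omega
    rcases hcase with hcase | hcase
    · have hki' : t k < t i := hmono (show (k:ℕ) < (i:ℕ) from hcase)
      have hkx : t k < x := lt_of_lt_of_le hki' hx.1
      have := hposIcc k (t k) x (htmem k) (hI hx) hkx
        (by rw [hpeak k]; norm_num) hpos (t i) ⟨le_of_lt hki', hx.1⟩
      rw [hzero k i hki] at this
      exact lt_irrefl 0 this
    · have hjk : t j < t k := hmono (show ((i:ℕ)+1) < (k:ℕ) from hcase)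
      have hxk : x < t k := lt_of_le_of_lt hx.2 hjk
      have := hposIcc k x (t k) (hI hx) (htmem k) hxk
        hpos (by rw [hpeak k]; norm_num) (t j) ⟨hx.2, le_of_lt hjk⟩
      rw [hzero k j hkj] at this
      exact lt_irrefl 0 this
  -- f i + f j = 1 on [t i, t j]
  have hsum2 : ∀ x ∈ Set.Icc (t i) (t j), f i x + f j x = 1 := by
    intro x hx
    have hs := hruspini x (hI hx)
    have haddi := Finset.add_sum_erase Finset.univ (fun k => f k x) (Finset.mem_univ i)
    have hjmem : j ∈ Finset.univ.erase i := by simp [hji]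
    have haddj := Finset.add_sum_erase (Finset.univ.erase i) (fun k => f k x) hjmem
    have hrest : ∑ k ∈ (Finset.univ.erase i).erase j, f k x = 0 := by
      apply Finset.sum_eq_zero
      intro k hk
      have hkj : k ≠ j := (Finset.mem_erase.mp hk).1
      have hki : k ≠ i := (Finset.mem_erase.mp (Finset.mem_erase.mp hk).2).1
      exact hother x hx k hki hkj
    rw [hrest] at haddj
    rw [← haddi, ← haddj] at hs
    linarith
  -- injectivity of f i on [t i, t j]
  have hinjkey : ∀ x ∈ Set.Icc (t i) (t j), ∀ y ∈ Set.Icc (t i) (t j),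
      x < y → f i x ≠ f i y := by
    intro x hx y hy hxy heq
    rcases eq_or_lt_of_le (hmap i (hI hx)).1 with hc0 | hcpos
    · -- f i x = 0, then f j x = 1 contradicting strong normality
      have hfj : f j x = 1 := by have := hsum2 x hx; linarith
      have hxne : x ≠ t j := ne_of_lt (lt_of_lt_of_le hxy hy.2)
      exact absurd hfj (ne_of_lt (hlt j x (hI hx) hxne))
    · rcases eq_or_lt_of_le hx.1 with hxa | hxa
      · -- x = t i, so f i y = 1 contradicting strong normality
        have hfy : f i y = 1 := by rw [← heq, ← hxa, hpeak]
        have hyne : y ≠ t i := by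
          intro h; rw [h, hxa] at hxy; exact lt_irrefl _ hxy
        exact absurd hfy (ne_of_lt (hlt i y (hI hy) hyne))
      · -- t i < x < y : use strict min-convexity twice
        have hfy : 0 < f i y := heq ▸ hcpos
        have hsub1 : Set.Icc x y ⊆ {z | z ∈ Set.Icc (0:ℝ) 1 ∧ 0 < f i z} := by
          intro z hz
          have hzI : z ∈ Set.Icc (t i) (t j) :=
            ⟨le_trans hx.1 hz.1, le_trans hz.2 hy.2⟩
          exact ⟨hI hzI, hposIcc i x y (hI hx) (hI hy) hxy hcpos hfy z hz⟩
        have hw := hsconv i x y hxy hsub1 (1/2) (by norm_num) (by norm_num)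
        rw [← heq, min_self] at hw
        set w : ℝ := 1/2 * x + (1 - 1/2) * y with hwdef
        have hxw : x < w := by rw [hwdef]; linarith
        have hwy : w < y := by rw [hwdef]; linarith
        have hwI : w ∈ Set.Icc (t i) (t j) :=
          ⟨le_trans hx.1 (le_of_lt hxw), le_trans (le_of_lt hwy) hy.2⟩
        have haw : t i < w := lt_trans hxa hxw
        have hsub2 : Set.Icc (t i) w ⊆ {z | z ∈ Set.Icc (0:ℝ) 1 ∧ 0 < f i z} := by
          intro z hz
          have hzI : z ∈ Set.Icc (t i) (t j) := ⟨hz.1, le_trans hz.2 hwI.2⟩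
          refine ⟨hI hzI, hposIcc i (t i) w (htmem i) (hI hwI) haw
            (by rw [hpeak]; norm_num) (lt_trans hcpos hw) z hz⟩
        have hne : w - t i ≠ 0 := ne_of_gt (by linarith)
        set l : ℝ := (w - x) / (w - t i) with hl
        have hl0 : 0 < l := div_pos (by linarith) (by linarith)
        have hl1 : l < 1 := by
          rw [hl, div_lt_one (by linarith)]; linarith
        have hcomb : l * t i + (1 - l) * w = x := by
          rw [hl]; field_simp; ring
        have hx' := hsconv i (t i) w haw hsub2 l hl0 hl1
        rw [hcomb, hpeak] at hx'
        have hwle : f i w ≤ 1 := (hmap i (hI hwI)).2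
        have : min 1 (f i w) = f i w := min_eq_right hwle
        rw [this] at hx'
        linarith
  have hinji : Set.InjOn (f i) (Set.Icc (t i) (t j)) := by
    intro x hx y hy heq
    rcases lt_trichotomy x y with h | h | h
    · exact absurd heq (hinjkey x hx y hy h)
    · exact h
    · exact absurd heq.symm (hinjkey y hy x hx h)
  have hinjj : Set.InjOn (f j) (Set.Icc (t i) (t j)) := by
    intro x hx y hy heq
    apply hinji hx hy
    have h1 := hsum2 x hx
    have h2 := hsum2 y hy
    linarith
  have hfib : f i (t j) = 0 := hzero i j (Ne.symm hji)
  have hfja : f j (t i) = 0 := hzero j i hji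
  have hsurji : Set.SurjOn (f i) (Set.Icc (t i) (t j)) (Set.Icc 0 1) := by
    have h := intermediate_value_Icc' (le_of_lt hab) ((hcont i).mono hI)
    rw [hfib, hpeak i] at h
    exact h
  have hsurjj : Set.SurjOn (f j) (Set.Icc (t i) (t j)) (Set.Icc 0 1) := by
    have h := intermediate_value_Icc (le_of_lt hab) ((hcont j).mono hI)
    rw [hfja, hpeak j] at h
    exact h
  exact ⟨⟨fun x hx => hmap i (hI hx), hinji, hsurji⟩,
    ⟨fun x hx => hmap j (hI hx), hinjj, hsurjj⟩⟩
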